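/- Let k and J be integers with k ≥ 2 and 1 ≤ 2^J ≤ P, and set X_j = 2^{-j}·P. Then for all real β, the sum over 0 ≤ j ≤ J of X_j·(1 + X_j^k·|β|)^{-1/k} is ≪ P·log(2 + P^k·|β|)·(1 + P^k·|β|)^{-1/k}, with implied constant depending only on k. -/

import Mathlib

open Finset Real

lemma tail_geom (n N : ℕ) :
    ∑ j ∈ Finset.range N, (if j ≤ n then (0:ℝ) else (1/2)^j) ≤ 2 * (1/2)^(n+1) := by
  classical
  have h1 : ∑ j ∈ Finset.range N, (if j ≤ n then (0:ℝ) else (1/2)^j)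
      = ∑ j ∈ (Finset.range N).filter (fun j => ¬ j ≤ n), (1/2:ℝ)^j := by
    rw [Finset.sum_filter]
    apply Finset.sum_congr rfl
    intro j _
    by_cases h : j ≤ n <;> simp [h]
  have h2 : (Finset.range N).filter (fun j => ¬ j ≤ n) = Finset.Ico (n+1) N := by
    ext j; simp [Finset.mem_Ico, Finset.mem_range]; omega
  rw [h1, h2]
  by_cases h : n + 1 ≤ N
  · rw [geom_sum_Ico (by norm_num : (1/2:ℝ) ≠ 1) h]
    have hp : (0:ℝ) ≤ (1/2:ℝ)^N := by positivity
    have heq : ((1/2:ℝ)^N - (1/2)^(n+1)) / ((1/2) - 1)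
        = 2 * ((1/2:ℝ)^(n+1) - (1/2)^N) := by ring
    rw [heq]
    nlinarith [pow_pos (by norm_num : (0:ℝ) < 1/2) (n+1)]
  · rw [Finset.Ico_eq_empty (by omega)]
    simp

lemma key_sum (M : ℝ) (hM : 1 ≤ M) (N : ℕ) :
    ∑ j ∈ Finset.range N, min ((1/2:ℝ)^j * M) 1 ≤ Real.logb 2 M + 3 := by
  classical
  set n := ⌊Real.logb 2 M⌋₊ with hn
  have hM0 : (0:ℝ) < M := by linarith
  have hlogb0 : 0 ≤ Real.logb 2 M := Real.logb_nonneg one_lt_two hM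
  have hnle : (n:ℝ) ≤ Real.logb 2 M := Nat.floor_le hlogb0
  have hlt : Real.logb 2 M < n + 1 := Nat.lt_floor_add_one _
  have hMlt : M < 2^(n+1) := by
    have h1 : M = (2:ℝ) ^ (Real.logb 2 M) := (Real.rpow_logb (by norm_num) (by norm_num) hM0).symm
    have h2 : (2:ℝ) ^ (Real.logb 2 M) < (2:ℝ) ^ ((n:ℝ)+1) :=
      Real.rpow_lt_rpow_of_exponent_lt (by norm_num) hlt
    have h3 : (2:ℝ) ^ ((n:ℝ)+1) = (2:ℝ)^(n+1) := by
      rw [← Real.rpow_natCast 2 (n+1)]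
      push_cast
      ring_nf
    rw [h1, ← h3]
    exact h2
  have step1 : ∀ j ∈ Finset.range N, min ((1/2:ℝ)^j * M) 1 ≤
      (if j ≤ n then (1:ℝ) else 0) + (if j ≤ n then (0:ℝ) else (1/2)^j * 2^(n+1)) := by
    intro j _
    by_cases h : j ≤ n
    · simpa [h] using min_le_right ((1/2:ℝ)^j * M) 1
    · simp only [h, if_false, zero_add]
      calc min ((1/2:ℝ)^j * M) 1 ≤ (1/2)^j * M := min_le_left _ _
        _ ≤ (1/2)^j * 2^(n+1) :=
            mul_le_mul_of_nonneg_left (le_of_lt hMlt) (by positivity)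
  have hA : ∑ j ∈ Finset.range N, (if j ≤ n then (1:ℝ) else 0) ≤ (n:ℝ) + 1 := by
    rw [Finset.sum_boole]
    have hsub : (Finset.range N).filter (fun j => j ≤ n) ⊆ Finset.range (n+1) := by
      intro x hx
      simp only [Finset.mem_filter, Finset.mem_range] at hx ⊢
      omega
    have := Finset.card_le_card hsub
    rw [Finset.card_range] at this
    exact_mod_cast this
  have hB : ∑ j ∈ Finset.range N, (if j ≤ n then (0:ℝ) else (1/2)^j * 2^(n+1)) ≤ 2 := by
    have heq : ∀ j, (if j ≤ n then (0:ℝ) else (1/2)^j * 2^(n+1))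
        = (if j ≤ n then (0:ℝ) else (1/2)^j) * 2^(n+1) := by
      intro j; by_cases h : j ≤ n <;> simp [h]
    calc ∑ j ∈ Finset.range N, (if j ≤ n then (0:ℝ) else (1/2)^j * 2^(n+1))
        = (∑ j ∈ Finset.range N, (if j ≤ n then (0:ℝ) else (1/2)^j)) * 2^(n+1) := by
          rw [Finset.sum_mul]; exact Finset.sum_congr rfl (fun j _ => heq j)
      _ ≤ (2 * (1/2)^(n+1)) * 2^(n+1) :=
          mul_le_mul_of_nonneg_right (tail_geom n N) (by positivity)
      _ = 2 := by
          rw [mul_assoc, ← mul_pow]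
          norm_num
  calc ∑ j ∈ Finset.range N, min ((1/2:ℝ)^j * M) 1
      ≤ ∑ j ∈ Finset.range N, ((if j ≤ n then (1:ℝ) else 0)
          + (if j ≤ n then (0:ℝ) else (1/2)^j * 2^(n+1))) := Finset.sum_le_sum step1
    _ = (∑ j ∈ Finset.range N, (if j ≤ n then (1:ℝ) else 0))
          + ∑ j ∈ Finset.range N, (if j ≤ n then (0:ℝ) else (1/2)^j * 2^(n+1)) :=
        Finset.sum_add_distrib
    _ ≤ ((n:ℝ) + 1) + 2 := add_le_add hA hB
    _ ≤ Real.logb 2 M + 3 := by linarith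

/-- Let `k` and `J` be integers with `k ≥ 2` and `1 ≤ 2^J ≤ P`, and set
`X_j = 2^{-j}·P`. Then for all real `β`, the sum over `0 ≤ j ≤ J` of
`X_j·(1 + X_j^k·|β|)^{-1/k}` is `≪ P·log(2 + P^k·|β|)·(1 + P^k·|β|)^{-1/k}`, with
implied constant depending only on `k`. -/
theorem stmt6 (k : ℕ) (hk : 2 ≤ k) :
    ∃ C : ℝ, 0 < C ∧ ∀ P : ℝ, 0 < P → ∀ J : ℕ, (2 : ℝ) ^ J ≤ P → ∀ β : ℝ,
      ∑ j ∈ Finset.range (J + 1),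
        ((2 : ℝ) ^ (-(j : ℝ)) * P) *
          (1 + ((2 : ℝ) ^ (-(j : ℝ)) * P) ^ k * |β|) ^ (-(1 : ℝ) / k)
        ≤ C * P * Real.log (2 + P ^ k * |β|) * (1 + P ^ k * |β|) ^ (-(1 : ℝ) / k) := by
  refine ⟨6, by norm_num, ?_⟩
  intro P hP J hJP β
  have hk2 : (2:ℝ) ≤ (k:ℝ) := by exact_mod_cast hk
  have hkpos : (0:ℝ) < k := by linarith
  set T := P^k * |β| with hT
  have hT0 : 0 ≤ T := by positivity
  have h1T : (1:ℝ) ≤ 1 + T := by linarith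
  set M := (1+T) ^ ((1:ℝ)/k) with hM
  have hM1 : 1 ≤ M := Real.one_le_rpow h1T (by positivity)
  have hM0 : 0 < M := by linarith
  have hMne : M ≠ 0 := ne_of_gt hM0
  have hMinv : (1 + T) ^ (-(1:ℝ)/k) = M⁻¹ := by
    rw [hM, ← Real.rpow_neg (by linarith : (0:ℝ) ≤ 1+T)]
    congr 1; ring
  have hneg : -(1:ℝ)/(k:ℝ) ≤ 0 := by
    rw [neg_div]; exact neg_nonpos.mpr (by positivity)
  rw [hMinv]
  have hterm : ∀ j ∈ Finset.range (J+1),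
      ((2:ℝ) ^ (-(j:ℝ)) * P) * (1 + ((2:ℝ) ^ (-(j:ℝ)) * P) ^ k * |β|) ^ (-(1:ℝ)/k)
        ≤ (P * M⁻¹) * min ((1/2:ℝ)^j * M) 1 := by
    intro j _
    have hxj : (2:ℝ) ^ (-(j:ℝ)) = (1/2:ℝ)^j := by
      rw [Real.rpow_neg (by norm_num : (0:ℝ) ≤ 2), Real.rpow_natCast, one_div, inv_pow]
    rw [hxj]
    set x := (1/2:ℝ)^j with hx
    have hx0 : 0 < x := by positivity
    have hx1 : x ≤ 1 := pow_le_one₀ (by norm_num) (by norm_num)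
    set A := 1 + (x*P)^k * |β| with hA
    have hA1 : (1:ℝ) ≤ A := by
      have : 0 ≤ (x*P)^k * |β| := by positivity
      linarith
    have hA0 : (0:ℝ) < A := by linarith
    have bound1 : x * P * A ^ (-(1:ℝ)/k) ≤ x * P := by
      have h1 : A ^ (-(1:ℝ)/k) ≤ 1 := Real.rpow_le_one_of_one_le_of_nonpos hA1 hneg
      nlinarith [mul_pos hx0 hP]
    have bound2 : x * P * A ^ (-(1:ℝ)/k) ≤ P * M⁻¹ := by
      have hxk1 : x^k ≤ 1 := pow_le_one₀ hx0.le hx1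
      have hxkpos : (0:ℝ) < x^k := by positivity
      have hcomp : x^k * (1+T) ≤ A := by
        rw [hA, hT, mul_pow]
        nlinarith [abs_nonneg β, pow_pos hP k, mul_nonneg (pow_pos hP k).le (abs_nonneg β)]
      have h1 : A ^ (-(1:ℝ)/k) ≤ (x^k * (1+T)) ^ (-(1:ℝ)/k) :=
        Real.rpow_le_rpow_of_nonpos (by positivity) hcomp hneg
      have h2 : (x^k * (1+T)) ^ (-(1:ℝ)/k) = x⁻¹ * M⁻¹ := by
        rw [Real.mul_rpow hxkpos.le (by linarith : (0:ℝ) ≤ 1+T), hMinv]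
        congr 1
        rw [← Real.rpow_natCast x k, ← Real.rpow_mul hx0.le]
        rw [show (k:ℝ) * (-(1:ℝ)/k) = -1 by field_simp]
        exact Real.rpow_neg_one x
      calc x * P * A ^ (-(1:ℝ)/k) ≤ x * P * (x⁻¹ * M⁻¹) := by
            exact mul_le_mul_of_nonneg_left (h1.trans_eq h2) (by positivity)
        _ = P * M⁻¹ := by field_simp
    have hmineq : (P * M⁻¹) * min (x * M) 1 = min (x*P) (P*M⁻¹) := by
      rw [mul_min_of_nonneg _ _ (by positivity : (0:ℝ) ≤ P * M⁻¹)]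
      congr 1
      · field_simp
      · rw [mul_one]
    rw [hmineq]
    exact le_min bound1 bound2
  calc ∑ j ∈ Finset.range (J+1),
        ((2:ℝ) ^ (-(j:ℝ)) * P) * (1 + ((2:ℝ) ^ (-(j:ℝ)) * P) ^ k * |β|) ^ (-(1:ℝ)/k)
      ≤ ∑ j ∈ Finset.range (J+1), (P * M⁻¹) * min ((1/2:ℝ)^j * M) 1 :=
        Finset.sum_le_sum hterm
    _ = (P * M⁻¹) * ∑ j ∈ Finset.range (J+1), min ((1/2:ℝ)^j * M) 1 := by
        rw [Finset.mul_sum]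
    _ ≤ (P * M⁻¹) * (Real.logb 2 M + 3) :=
        mul_le_mul_of_nonneg_left (key_sum M hM1 (J+1)) (by positivity)
    _ ≤ 6 * P * Real.log (2 + T) * M⁻¹ := by
        have hlogM : Real.log M = (1/(k:ℝ)) * Real.log (1+T) :=
          Real.log_rpow (by linarith) _
        have hL1 : 0 ≤ Real.log (1+T) := Real.log_nonneg h1T
        have hL12 : Real.log (1+T) ≤ Real.log (2+T) :=
          Real.log_le_log (by linarith) (by linarith)
        have hl2L : Real.log 2 ≤ Real.log (2+T) :=
          Real.log_le_log (by norm_num) (by linarith)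
        have hl2 : (0.6931471803:ℝ) < Real.log 2 := Real.log_two_gt_d9
        have hk1 : (1:ℝ)/(k:ℝ) ≤ 1 := by
          rw [div_le_one hkpos]; linarith
        have hlogb : Real.logb 2 M ≤ Real.log (2+T) / Real.log 2 := by
          rw [Real.logb, hlogM]
          apply div_le_div_of_nonneg_right ?_ (by linarith)
          nlinarith
        have hdiv : Real.log (2+T) / Real.log 2 ≤ 1.45 * Real.log (2+T) := by
          rw [div_le_iff₀ (by linarith : (0:ℝ) < Real.log 2)]
          nlinarith
        have hfin : Real.logb 2 M + 3 ≤ 6 * Real.log (2+T) := by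
          linarith
        calc (P * M⁻¹) * (Real.logb 2 M + 3)
            ≤ (P * M⁻¹) * (6 * Real.log (2+T)) :=
              mul_le_mul_of_nonneg_left hfin (by positivity)
          _ = 6 * P * Real.log (2+T) * M⁻¹ := by ring
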